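/- The set of outer products {m m^T mod its diagonal : m ∈ {-1,+1}^n, m_n = +1}, viewed as vectors in the space of symmetric n×n matrices with vanishing diagonal, forms a tight frame: there exists a > 0 such that for every symmetric matrix A with zero diagonal, a·‖A‖_F² = Σ_m ⟨A, m m^T⟩², where the inner product is the trace inner product restricted to off-diagonal entries. -/

import Mathlib

open Finset

private def eps (b : Bool) : ℝ := if b then -1 else 1

private def cnt {m : ℕ} (i j k l p : Fin m) : ℕ :=
  (if i = p then 1 else 0) + (if j = p then 1 else 0) +
  (if k = p then 1 else 0) + (if l = p then 1 else 0)

private lemma factor {m : ℕ} (s : Fin m → Bool) (i j k l : Fin m) :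
    eps (s i) * eps (s j) * eps (s k) * eps (s l) = ∏ p, eps (s p) ^ cnt i j k l p := by
  simp only [cnt, pow_add, Finset.prod_mul_distrib]
  simp [pow_ite, Finset.prod_ite_eq]

private lemma sum_eps_pow (e : ℕ) : (∑ b : Bool, eps b ^ e) = if Even e then 2 else 0 := by
  rcases Nat.even_or_odd e with h | h
  · simp [eps, h.neg_one_pow, h]
  · simp [eps, h.neg_one_pow, Nat.not_even_iff_odd.mpr h]

private lemma sum_cnt {m : ℕ} (i j k l : Fin m) : ∑ p, cnt i j k l p = 4 := by
  simp [cnt, Finset.sum_add_distrib, Finset.sum_ite_eq]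


private lemma sum_filter_eq_sum_snoc {n : ℕ} (g : (Fin (n+1) → Bool) → ℝ) :
    ∑ s ∈ Finset.univ.filter (fun s : Fin (n+1) → Bool => s (Fin.last n) = false), g s
      = ∑ t : Fin n → Bool, g (Fin.snoc t false) := by
  refine Finset.sum_nbij' (fun s => Fin.init s) (fun t => Fin.snoc t false)
    (fun _ _ => Finset.mem_univ _) ?_ ?_ ?_ ?_
  · intro t _
    simp [Fin.snoc_last]
  · intro s hs
    simp only [Finset.mem_filter] at hs
    have h2 := Fin.snoc_init_self s
    rw [hs.2] at h2
    exact h2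
  · intro t _
    simp [Fin.init_snoc]
  · intro s hs
    simp only [Finset.mem_filter] at hs
    have h2 := Fin.snoc_init_self s
    rw [hs.2] at h2
    exact congrArg g h2.symm

private lemma prod_even {n : ℕ} (i j k l : Fin (n+1)) :
    ∑ s ∈ Finset.univ.filter (fun s : Fin (n+1) → Bool => s (Fin.last n) = false),
      eps (s i) * eps (s j) * eps (s k) * eps (s l)
    = ∏ q : Fin n, (if Even (cnt i j k l (Fin.castSucc q)) then (2:ℝ) else 0) := by
  rw [sum_filter_eq_sum_snoc]
  have h1 : ∀ t : Fin n → Bool,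
      eps ((Fin.snoc t false : Fin (n+1) → Bool) i) * eps ((Fin.snoc t false : Fin (n+1) → Bool) j) * eps ((Fin.snoc t false : Fin (n+1) → Bool) k) *
        eps ((Fin.snoc t false : Fin (n+1) → Bool) l)
      = ∏ q : Fin n, eps (t q) ^ cnt i j k l (Fin.castSucc q) := by
    intro t
    rw [factor, Fin.prod_univ_castSucc]
    simp [Fin.snoc_castSucc, Fin.snoc_last, eps]
  simp only [h1]
  rw [← Fintype.piFinset_univ,
    Finset.sum_prod_piFinset Finset.univ (fun q b => eps b ^ cnt i j k l (Fin.castSucc q))]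
  exact Finset.prod_congr rfl fun q _ => sum_eps_pow _


private lemma even_cnt_pair1 {m : ℕ} (a b p : Fin m) : Even (cnt a b a b p) :=
  ⟨(if a = p then 1 else 0) + (if b = p then 1 else 0), by simp only [cnt]; ring⟩

private lemma even_cnt_pair2 {m : ℕ} (a b p : Fin m) : Even (cnt a b b a p) :=
  ⟨(if a = p then 1 else 0) + (if b = p then 1 else 0), by simp only [cnt]; ring⟩

private lemma S4 {n : ℕ} (i j k l : Fin (n+1)) (hij : i ≠ j) :
    ∑ s ∈ Finset.univ.filter (fun s : Fin (n+1) → Bool => s (Fin.last n) = false),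
      eps (s i) * eps (s j) * eps (s k) * eps (s l)
    = (if k = i ∧ l = j then (2:ℝ)^n else 0) + (if k = j ∧ l = i then (2:ℝ)^n else 0) := by
  rw [prod_even]
  by_cases hall : ∀ q : Fin n, Even (cnt i j k l (Fin.castSucc q))
  · have hprod : ∏ q : Fin n, (if Even (cnt i j k l (Fin.castSucc q)) then (2:ℝ) else 0)
        = 2^n := by
      rw [Finset.prod_congr rfl fun q _ => if_pos (hall q)]
      simp [Finset.prod_const, Finset.card_univ]
    rw [hprod]
    have allp : ∀ p : Fin (n+1), Even (cnt i j k l p) := by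
      intro p
      by_cases hp : p = Fin.last n
      · subst hp
        have hsum := sum_cnt i j k l
        rw [Fin.sum_univ_castSucc] at hsum
        have hev : Even (∑ q : Fin n, cnt i j k l (Fin.castSucc q)) :=
          Finset.sum_induction _ _ (fun a b => Even.add) Even.zero (fun q _ => hall q)
        have h4 : Even ((∑ q : Fin n, cnt i j k l (Fin.castSucc q)) +
            cnt i j k l (Fin.last n)) := by rw [hsum]; decide
        rw [Nat.even_add] at h4
        exact h4.mp hev
      · obtain ⟨q, rfl⟩ := Fin.exists_castSucc_eq.mpr hp
        exact hall q
    have hji : j ≠ i := Ne.symm hij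
    by_cases hk : k = i
    · have hkj : k ≠ j := fun hc => hij (hk.symm.trans hc)
      have hl : l = j := by
        by_contra hl
        have h2 := allp j
        simp [cnt, hij, hkj, hl] at h2
      rw [if_pos ⟨hk, hl⟩, if_neg (fun hc => hkj hc.1)]
      ring
    · have hl : l = i := by
        by_contra hl
        have h2 := allp i
        simp [cnt, hji, hk, hl] at h2
      have hli : l ≠ j := fun hc => hij (hl.symm.trans hc)
      have hkj : k = j := by
        by_contra hkj
        have h2 := allp j
        simp [cnt, hij, hkj, hli] at h2
      rw [if_neg (fun hc => hk hc.1), if_pos ⟨hkj, hl⟩]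
      ring
  · push_neg at hall
    obtain ⟨q, hq⟩ := hall
    rw [Finset.prod_eq_zero (Finset.mem_univ q)
      (show (if Even (cnt i j k l (Fin.castSucc q)) then (2:ℝ) else 0) = 0 from if_neg hq)]
    have h1 : ¬(k = i ∧ l = j) := by
      rintro ⟨rfl, rfl⟩
      exact hq (even_cnt_pair1 _ _ _)
    have h2 : ¬(k = j ∧ l = i) := by
      rintro ⟨rfl, rfl⟩
      exact hq (even_cnt_pair2 _ _ _)
    rw [if_neg h1, if_neg h2]
    ring


theorem outer_products_tight_frame (n : ℕ) :
    ∃ a : ℝ, 0 < a ∧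
      ∀ A : Matrix (Fin (n+1)) (Fin (n+1)) ℝ, A.IsSymm → (∀ i, A i i = 0) →
        a * (∑ i, ∑ j, (A i j)^2) =
          ∑ s ∈ Finset.univ.filter
              (fun s : Fin (n+1) → Bool => s (Fin.last n) = false),
            (∑ i, ∑ j, A i j * (if s i then (-1 : ℝ) else 1) *
              (if s j then (-1 : ℝ) else 1))^2 := by
  refine ⟨2^(n+1), by positivity, fun A hsymm hdiag => ?_⟩
  have heps : ∀ b : Bool, (if b then (-1:ℝ) else 1) = eps b := fun _ => rfl
  simp only [heps]
  have expand : ∀ s : Fin (n+1) → Bool,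
      (∑ i, ∑ j, A i j * eps (s i) * eps (s j))^2
      = ∑ i, ∑ k, ∑ j, ∑ l, (A i j * A k l) *
          (eps (s i) * eps (s j) * eps (s k) * eps (s l)) := by
    intro s
    rw [sq, Finset.sum_mul_sum]
    refine Finset.sum_congr rfl fun i _ => Finset.sum_congr rfl fun k _ => ?_
    rw [Finset.sum_mul_sum]
    exact Finset.sum_congr rfl fun j _ => Finset.sum_congr rfl fun l _ => by ring
  rw [Finset.sum_congr rfl (fun s _ => expand s)]
  have swap : ∑ s ∈ Finset.univ.filter
        (fun s : Fin (n+1) → Bool => s (Fin.last n) = false),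
      ∑ i, ∑ k, ∑ j, ∑ l, (A i j * A k l) *
          (eps (s i) * eps (s j) * eps (s k) * eps (s l))
      = ∑ i, ∑ k, ∑ j, ∑ l, (A i j * A k l) *
          ∑ s ∈ Finset.univ.filter
            (fun s : Fin (n+1) → Bool => s (Fin.last n) = false),
            eps (s i) * eps (s j) * eps (s k) * eps (s l) := by
    rw [Finset.sum_comm]
    refine Finset.sum_congr rfl fun i _ => ?_
    rw [Finset.sum_comm]
    refine Finset.sum_congr rfl fun k _ => ?_
    rw [Finset.sum_comm]
    refine Finset.sum_congr rfl fun j _ => ?_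
    rw [Finset.sum_comm]
    refine Finset.sum_congr rfl fun l _ => ?_
    rw [Finset.mul_sum]
  rw [swap]
  have hcoeff : ∀ i k j l : Fin (n+1), (A i j * A k l) *
        (∑ s ∈ Finset.univ.filter
            (fun s : Fin (n+1) → Bool => s (Fin.last n) = false),
          eps (s i) * eps (s j) * eps (s k) * eps (s l))
      = (A i j * A k l) * ((if k = i ∧ l = j then (2:ℝ)^n else 0)
          + (if k = j ∧ l = i then (2:ℝ)^n else 0)) := by
    intro i k j l
    by_cases hij : i = j
    · subst hij
      rw [hdiag i]
      ring
    · rw [S4 i j k l hij]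
  rw [Finset.sum_congr rfl fun i _ => Finset.sum_congr rfl fun k _ =>
    Finset.sum_congr rfl fun j _ => Finset.sum_congr rfl fun l _ => hcoeff i k j l]
  have hAsymm : ∀ i k : Fin (n+1), A k i = A i k := fun i k => hsymm.apply i k
  simp only [mul_add, Finset.sum_add_distrib, mul_ite, mul_zero, ite_and]
  simp only [Finset.sum_ite_irrel, Finset.sum_const_zero, Finset.sum_ite_eq,
    Finset.sum_ite_eq', Finset.mem_univ, if_true]
  simp only [Finset.mul_sum]
  rw [← Finset.sum_add_distrib]
  refine Finset.sum_congr rfl fun x _ => ?_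
  rw [← Finset.sum_add_distrib]
  refine Finset.sum_congr rfl fun y _ => ?_
  rw [hAsymm x y]
  ring
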